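/- For a nonnegative random variable X and real numbers 0 < p < q, one has ∫_0^∞ (E[min{x^q, X}]/x^q) · p x^{p-1} dx = (q/(q-p)) · E[X^{p/q}]. -/

import Mathlib

open MeasureTheory Real Set

lemma key_integral (p q : ℝ) (hp : 0 < p) (hpq : p < q) {c : ℝ} (hc : 0 ≤ c) :
    ∫⁻ x in Set.Ioi (0 : ℝ),
        min (ENNReal.ofReal (x ^ q)) (ENNReal.ofReal c)
          * ((ENNReal.ofReal (x ^ q))⁻¹ * ENNReal.ofReal (p * x ^ (p - 1)))
      = ENNReal.ofReal (q / (q - p)) * ENNReal.ofReal (c ^ (p / q)) := by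
  have hq : 0 < q := hp.trans hpq
  rcases eq_or_lt_of_le hc with hc0 | hc0
  · simp [← hc0, Real.zero_rpow (by positivity : p / q ≠ 0)]
  · have ht0 : 0 < c ^ (1 / q) := Real.rpow_pos_of_pos hc0 _
    set t := c ^ (1 / q) with ht
    have htq : t ^ q = c := by
      rw [ht, ← Real.rpow_mul hc0.le, one_div_mul_cancel hq.ne', Real.rpow_one]
    have hcpq : c ^ (p / q) = t ^ p := by
      rw [ht, ← Real.rpow_mul hc0.le, one_div_mul_eq_div]
    rw [← Set.Ioc_union_Ioi_eq_Ioi ht0.le,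
      lintegral_union measurableSet_Ioi (Set.Ioc_disjoint_Ioi le_rfl)]
    have h1 : ∫⁻ x in Set.Ioc (0 : ℝ) t,
        min (ENNReal.ofReal (x ^ q)) (ENNReal.ofReal c)
          * ((ENNReal.ofReal (x ^ q))⁻¹ * ENNReal.ofReal (p * x ^ (p - 1)))
        = ENNReal.ofReal (c ^ (p / q)) := by
      rw [setLIntegral_congr_fun measurableSet_Ioc
        (g := fun x => ENNReal.ofReal (p * x ^ (p - 1))) ?_]
      · have hint : IntegrableOn (fun x : ℝ => p * x ^ (p - 1)) (Set.Ioc 0 t) :=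
          ((intervalIntegrable_iff_integrableOn_Ioc_of_le ht0.le).1
            (intervalIntegral.intervalIntegrable_rpow' (by linarith))).const_mul p
        rw [← ofReal_integral_eq_lintegral_ofReal hint ?_]
        · congr 1
          rw [← intervalIntegral.integral_of_le ht0.le,
            intervalIntegral.integral_const_mul, integral_rpow (Or.inl (by linarith)),
            sub_add_cancel, Real.zero_rpow hp.ne', hcpq]
          field_simp
          simp
        · filter_upwards [ae_restrict_mem measurableSet_Ioc] with x hx
          have := hx.1
          positivity
      · intro x hx
        beta_reduce
        have hx0 : 0 < x := hx.1
        have hxq : x ^ q ≤ c := by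
          rw [← htq]
          exact Real.rpow_le_rpow hx0.le hx.2 hq.le
        rw [min_eq_left (ENNReal.ofReal_le_ofReal hxq), ← mul_assoc,
          ENNReal.mul_inv_cancel (by simp [ENNReal.ofReal_pos, Real.rpow_pos_of_pos hx0])
            ENNReal.ofReal_ne_top, one_mul]
    have h2 : ∫⁻ x in Set.Ioi t,
        min (ENNReal.ofReal (x ^ q)) (ENNReal.ofReal c)
          * ((ENNReal.ofReal (x ^ q))⁻¹ * ENNReal.ofReal (p * x ^ (p - 1)))
        = ENNReal.ofReal (p / (q - p) * c ^ (p / q)) := by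
      rw [setLIntegral_congr_fun measurableSet_Ioi
        (g := fun x => ENNReal.ofReal (c * p * x ^ (p - 1 - q))) ?_]
      · have hlt : p - 1 - q < -1 := by linarith
        have hint : IntegrableOn (fun x : ℝ => c * p * x ^ (p - 1 - q)) (Set.Ioi t) :=
          (integrableOn_Ioi_rpow_of_lt hlt ht0).const_mul (c * p)
        rw [← ofReal_integral_eq_lintegral_ofReal hint ?_]
        · congr 1
          rw [integral_const_mul, integral_Ioi_rpow_of_lt hlt ht0]
          have h3 : c * t ^ (p - 1 - q + 1) = c ^ (p / q) := by
            have he : (1 : ℝ) + 1 / q * (p - 1 - q + 1) = p / q := by field_simp; ring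
            rw [ht, ← Real.rpow_mul hc0.le, ← he, Real.rpow_add hc0, Real.rpow_one]
          have hne : p - 1 - q + 1 ≠ 0 := by intro h; linarith
          have hqpne : q - p ≠ 0 := by intro h; linarith
          have : c * p * (-t ^ (p - 1 - q + 1) / (p - 1 - q + 1))
              = p / (q - p) * (c * t ^ (p - 1 - q + 1)) := by
            field_simp
            ring
          rw [this, h3]
        · filter_upwards [ae_restrict_mem measurableSet_Ioi] with x hx
          have hx0 : 0 < x := ht0.trans hx
          positivity
      · intro x hx
        beta_reduce
        have hx0 : 0 < x := ht0.trans hx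
        have hxq : c ≤ x ^ q := by
          rw [← htq]
          exact Real.rpow_le_rpow ht0.le hx.le hq.le
        rw [min_eq_right (ENNReal.ofReal_le_ofReal hxq),
          ← ENNReal.ofReal_inv_of_pos (Real.rpow_pos_of_pos hx0 q),
          ← ENNReal.ofReal_mul (by positivity), ← ENNReal.ofReal_mul hc]
        congr 1
        rw [Real.rpow_sub hx0 (p - 1) q]
        field_simp
    have hqp' : (0:ℝ) < q - p := by linarith
    rw [h1, h2, ← ENNReal.ofReal_add (by positivity) (by positivity),
      ← ENNReal.ofReal_mul (by positivity)]
    congr 1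
    have hqp : q - p ≠ 0 := by intro h; linarith
    field_simp
    ring

theorem stmt1 {Ω : Type*} [MeasurableSpace Ω] (P : Measure Ω) [IsProbabilityMeasure P]
    (X : Ω → ℝ) (hX : Measurable X) (hX0 : ∀ ω, 0 ≤ X ω)
    (p q : ℝ) (hp : 0 < p) (hpq : p < q) :
    ∫⁻ x in Set.Ioi (0 : ℝ),
        (∫⁻ ω, min (ENNReal.ofReal (x ^ q)) (ENNReal.ofReal (X ω)) ∂P) / ENNReal.ofReal (x ^ q)
          * ENNReal.ofReal (p * x ^ (p - 1))
      = ENNReal.ofReal (q / (q - p)) * ∫⁻ ω, ENNReal.ofReal (X ω ^ (p / q)) ∂P := by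
  have hmeas : ∀ x : ℝ, Measurable fun ω => min (ENNReal.ofReal (x ^ q)) (ENNReal.ofReal (X ω)) :=
    fun x => measurable_const.min hX.ennreal_ofReal
  calc
    ∫⁻ x in Set.Ioi (0 : ℝ),
        (∫⁻ ω, min (ENNReal.ofReal (x ^ q)) (ENNReal.ofReal (X ω)) ∂P) / ENNReal.ofReal (x ^ q)
          * ENNReal.ofReal (p * x ^ (p - 1))
      = ∫⁻ x in Set.Ioi (0 : ℝ), ∫⁻ ω, min (ENNReal.ofReal (x ^ q)) (ENNReal.ofReal (X ω))
          * ((ENNReal.ofReal (x ^ q))⁻¹ * ENNReal.ofReal (p * x ^ (p - 1))) ∂P := by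
        refine lintegral_congr fun x => ?_
        rw [div_eq_mul_inv, mul_assoc, lintegral_mul_const _ (hmeas x)]
    _ = ∫⁻ ω, ∫⁻ x in Set.Ioi (0 : ℝ), min (ENNReal.ofReal (x ^ q)) (ENNReal.ofReal (X ω))
          * ((ENNReal.ofReal (x ^ q))⁻¹ * ENNReal.ofReal (p * x ^ (p - 1))) ∂volume ∂P := by
        refine lintegral_lintegral_swap ?_
        apply Measurable.aemeasurable
        fun_prop
    _ = ∫⁻ ω, ENNReal.ofReal (q / (q - p)) * ENNReal.ofReal (X ω ^ (p / q)) ∂P :=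
        lintegral_congr fun ω => key_integral p q hp hpq (hX0 ω)
    _ = ENNReal.ofReal (q / (q - p)) * ∫⁻ ω, ENNReal.ofReal (X ω ^ (p / q)) ∂P :=
        lintegral_const_mul _ (by fun_prop)
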